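/- Consider the single-support V-SLIP model with stance contact point c1 ∈ ℝ and Hamiltonian H(q,p) = (p1² + p2²)/(2 m_h) + m_h g0 q2 + (k0/2)(L0 − L1(q))², where L1(q) = sqrt((q1 − c1)² + q2²), and control potential φ_1(q) = −(1/2)(L0 − L1(q))². Let u1 : [t0, t1] → ℝ be continuous with |u1(t)| ≤ ū for all t, and let (q(t), p(t)) be a C¹ solution of q̇ = ∂H/∂p, ṗ = −∂H/∂q + u1(t) ∇φ_1(q) such that 0 ≤ L1(q(t)) ≤ L0 for all t, and such that there exists t_m ∈ [t0, t1] with t ↦ φ_1(q(t)) monotone on [t0, t_m] and monotone on [t_m, t1]. Then the total change of energy during the single support phase is bounded: |H(q(t1), p(t1)) − H(q(t0), p(t0))| ≤ ū · L0². -/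

import Mathlib

/-- Stance leg length `L1(q) = sqrt((q1 - c1)^2 + q2^2)`. -/
noncomputable def legLen (c q1 q2 : ℝ) : ℝ := Real.sqrt ((q1 - c) ^ 2 + q2 ^ 2)

/-- Hamiltonian of the single-support V-SLIP model. -/
noncomputable def Hss (mh g0 k0 L0 c1 q1 q2 p1 p2 : ℝ) : ℝ :=
  (p1 ^ 2 + p2 ^ 2) / (2 * mh) + mh * g0 * q2 + k0 / 2 * (L0 - legLen c1 q1 q2) ^ 2

/-- Control potential `φ_1(q) = -(1/2)(L0 - L1(q))^2`. -/
noncomputable def phiPot (c L0 q1 q2 : ℝ) : ℝ := -(1 / 2) * (L0 - legLen c q1 q2) ^ 2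

/-- `∂φ_1/∂q1` (valid for `L1 > 0`). -/
noncomputable def dphi1 (c L0 q1 q2 : ℝ) : ℝ :=
  (L0 - legLen c q1 q2) * (q1 - c) / legLen c q1 q2

/-- `∂φ_1/∂q2` (valid for `L1 > 0`). -/
noncomputable def dphi2 (c L0 q1 q2 : ℝ) : ℝ :=
  (L0 - legLen c q1 q2) * q2 / legLen c q1 q2

open Set MeasureTheory intervalIntegral Filter

lemma legLen_nonneg (c a b : ℝ) : 0 ≤ legLen c a b := Real.sqrt_nonneg _

lemma deriv_nonneg_of_monotoneOn {f : ℝ → ℝ} {a b t d : ℝ}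
    (hm : MonotoneOn f (Set.Icc a b)) (ht : t ∈ Set.Ioo a b) (hd : HasDerivAt f d t) : 0 ≤ d := by
  have h0 : HasDerivWithinAt f d (Set.Ioi t) t := hd.hasDerivWithinAt
  rw [hasDerivWithinAt_iff_tendsto_slope] at h0
  rw [Set.diff_singleton_eq_self (by simp)] at h0
  refine ge_of_tendsto h0 ?_
  filter_upwards [Ioo_mem_nhdsGT_of_mem ⟨le_refl t, ht.2⟩] with y hy
  rw [slope_def_field]
  have h1 : f t ≤ f y := hm ⟨ht.1.le, ht.2.le⟩ ⟨(ht.1.trans hy.1).le, hy.2.le⟩ hy.1.le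
  exact div_nonneg (by linarith) (by linarith [hy.1])

lemma deriv_nonpos_of_antitoneOn {f : ℝ → ℝ} {a b t d : ℝ}
    (hm : AntitoneOn f (Set.Icc a b)) (ht : t ∈ Set.Ioo a b) (hd : HasDerivAt f d t) : d ≤ 0 := by
  have := deriv_nonneg_of_monotoneOn (f := fun x => -f x) hm.neg ht hd.neg
  linarith

lemma legLen_abs_fst (c a b : ℝ) : |a - c| ≤ legLen c a b := by
  rw [legLen, ← Real.sqrt_sq_eq_abs]
  exact Real.sqrt_le_sqrt (by nlinarith [sq_nonneg b])

lemma legLen_abs_snd (c a b : ℝ) : |b| ≤ legLen c a b := by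
  rw [legLen, ← Real.sqrt_sq_eq_abs]
  exact Real.sqrt_le_sqrt (by nlinarith [sq_nonneg (a - c)])

lemma dphi1_abs_le (c L0 a b : ℝ) (hL : legLen c a b ≤ L0) : |dphi1 c L0 a b| ≤ L0 := by
  have hl0 : 0 ≤ legLen c a b := legLen_nonneg c a b
  have hL0 : 0 ≤ L0 := le_trans hl0 hL
  rcases eq_or_lt_of_le hl0 with h | h
  · rw [dphi1, ← h, div_zero]; simpa using hL0
  · rw [dphi1, abs_div, abs_mul, abs_of_pos h, div_le_iff₀ h]
    have h1 : |L0 - legLen c a b| ≤ L0 := by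
      rw [abs_of_nonneg (by linarith)]; linarith
    have := legLen_abs_fst c a b
    calc |L0 - legLen c a b| * |a - c| ≤ L0 * legLen c a b :=
      mul_le_mul h1 this (abs_nonneg _) hL0

lemma dphi2_abs_le (c L0 a b : ℝ) (hL : legLen c a b ≤ L0) : |dphi2 c L0 a b| ≤ L0 := by
  have hl0 : 0 ≤ legLen c a b := legLen_nonneg c a b
  have hL0 : 0 ≤ L0 := le_trans hl0 hL
  rcases eq_or_lt_of_le hl0 with h | h
  · rw [dphi2, ← h, div_zero]; simpa using hL0
  · rw [dphi2, abs_div, abs_mul, abs_of_pos h, div_le_iff₀ h]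
    have h1 : |L0 - legLen c a b| ≤ L0 := by
      rw [abs_of_nonneg (by linarith)]; linarith
    have := legLen_abs_snd c a b
    calc |L0 - legLen c a b| * |b| ≤ L0 * legLen c a b :=
      mul_le_mul h1 this (abs_nonneg _) hL0

lemma g_abs_le (mh c1 L0 x y z w : ℝ) (hmh : 0 < mh) (hL : legLen c1 x y ≤ L0) :
    |dphi1 c1 L0 x y * (z / mh) + dphi2 c1 L0 x y * (w / mh)| ≤ L0 * ((|z| + |w|) / mh) := by
  have hL0 : 0 ≤ L0 := le_trans (legLen_nonneg c1 x y) hL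
  calc |dphi1 c1 L0 x y * (z / mh) + dphi2 c1 L0 x y * (w / mh)|
      ≤ |dphi1 c1 L0 x y| * (|z| / mh) + |dphi2 c1 L0 x y| * (|w| / mh) := by
        refine (abs_add_le _ _).trans ?_
        rw [abs_mul, abs_mul, abs_div, abs_div, abs_of_pos hmh]
    _ ≤ L0 * (|z| / mh) + L0 * (|w| / mh) := by
        gcongr
        · exact dphi1_abs_le c1 L0 x y hL
        · exact dphi2_abs_le c1 L0 x y hL
    _ = L0 * ((|z| + |w|) / mh) := by ring

lemma legLen_contOn {t0 t1 c1 : ℝ} {q1 q2 : ℝ → ℝ}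
    (hq1c : ContinuousOn q1 (Set.Icc t0 t1)) (hq2c : ContinuousOn q2 (Set.Icc t0 t1)) :
    ContinuousOn (fun t => legLen c1 (q1 t) (q2 t)) (Set.Icc t0 t1) := by
  simp only [legLen]
  exact Real.continuous_sqrt.comp_continuousOn
    (((hq1c.sub continuousOn_const).pow 2).add (hq2c.pow 2))

lemma g_rewrite (mh c1 L0 x y z w : ℝ) :
    dphi1 c1 L0 x y * (z / mh) + dphi2 c1 L0 x y * (w / mh)
      = ((L0 - legLen c1 x y) * ((x - c1) * (z / mh) + y * (w / mh))) / legLen c1 x y := by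
  simp only [dphi1, dphi2]; ring

set_option maxHeartbeats 1000000 in
lemma gIntegrable (mh c1 L0 t0 t1 : ℝ) (hmh : 0 < mh)
    (q1 q2 p1 p2 f : ℝ → ℝ)
    (hLle : ∀ t ∈ Set.Icc t0 t1, legLen c1 (q1 t) (q2 t) ≤ L0)
    (hq1c : ContinuousOn q1 (Set.Icc t0 t1)) (hq2c : ContinuousOn q2 (Set.Icc t0 t1))
    (hp1c : ContinuousOn p1 (Set.Icc t0 t1)) (hp2c : ContinuousOn p2 (Set.Icc t0 t1))
    (hfc : ContinuousOn f (Set.Icc t0 t1)) {c d : ℝ}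
    (hc : c ∈ Set.Icc t0 t1) (hd : d ∈ Set.Icc t0 t1) :
    IntervalIntegrable (fun t => f t * (dphi1 c1 L0 (q1 t) (q2 t) * (p1 t / mh)
      + dphi2 c1 L0 (q1 t) (q2 t) * (p2 t / mh))) volume c d := by
  have hsub : Set.uIcc c d ⊆ Set.Icc t0 t1 := Set.uIcc_subset_Icc hc hd
  have hsub' : Set.uIoc c d ⊆ Set.Icc t0 t1 :=
    fun x hx => hsub (Set.Ioc_subset_Icc_self hx)
  have hLc : ContinuousOn (fun t => legLen c1 (q1 t) (q2 t)) (Set.Icc t0 t1) :=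
    legLen_contOn hq1c hq2c
  have hNc : ContinuousOn (fun t => (L0 - legLen c1 (q1 t) (q2 t))
      * ((q1 t - c1) * (p1 t / mh) + q2 t * (p2 t / mh))) (Set.Icc t0 t1) :=
    (continuousOn_const.sub hLc).mul
      (((hq1c.sub continuousOn_const).mul (hp1c.div_const mh)).add
        (hq2c.mul (hp2c.div_const mh)))
  -- measurability
  have asm : AEStronglyMeasurable (fun t => f t * (dphi1 c1 L0 (q1 t) (q2 t) * (p1 t / mh)
      + dphi2 c1 L0 (q1 t) (q2 t) * (p2 t / mh))) (volume.restrict (Set.uIoc c d)) := by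
    have h1 : AEStronglyMeasurable f (volume.restrict (Set.uIoc c d)) :=
      (hfc.mono hsub').aestronglyMeasurable measurableSet_uIoc
    have h2 : AEMeasurable (fun t => (L0 - legLen c1 (q1 t) (q2 t))
        * ((q1 t - c1) * (p1 t / mh) + q2 t * (p2 t / mh))) (volume.restrict (Set.uIoc c d)) :=
      (hNc.mono hsub').aemeasurable measurableSet_uIoc
    have h3 : AEMeasurable (fun t => legLen c1 (q1 t) (q2 t))
        (volume.restrict (Set.uIoc c d)) :=
      (hLc.mono hsub').aemeasurable measurableSet_uIoc
    have h4 : AEMeasurable (fun t => ((L0 - legLen c1 (q1 t) (q2 t))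
        * ((q1 t - c1) * (p1 t / mh) + q2 t * (p2 t / mh))) * (legLen c1 (q1 t) (q2 t))⁻¹)
        (volume.restrict (Set.uIoc c d)) := h2.mul h3.inv
    refine h1.mul ?_
    refine h4.aestronglyMeasurable.congr (Filter.Eventually.of_forall fun t => ?_)
    simp only [← div_eq_mul_inv]
    exact (g_rewrite mh c1 L0 (q1 t) (q2 t) (p1 t) (p2 t)).symm
  -- bounds
  obtain ⟨C1, hC1⟩ := isCompact_Icc.exists_bound_of_continuousOn hfc
  obtain ⟨C2, hC2⟩ := isCompact_Icc.exists_bound_of_continuousOn hp1c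
  obtain ⟨C3, hC3⟩ := isCompact_Icc.exists_bound_of_continuousOn hp2c
  have hC10 : 0 ≤ C1 := le_trans (norm_nonneg _) (hC1 c hc)
  have hC20 : 0 ≤ C2 := le_trans (norm_nonneg _) (hC2 c hc)
  have hC30 : 0 ≤ C3 := le_trans (norm_nonneg _) (hC3 c hc)
  have hL00 : 0 ≤ L0 := le_trans (legLen_nonneg c1 (q1 c) (q2 c)) (hLle c hc)
  rw [intervalIntegrable_iff]
  have hvol : volume (Set.uIoc c d) < ⊤ := by rw [Set.uIoc]; exact measure_Ioc_lt_top
  refine Integrable.mono' (g := fun _ => C1 * (L0 * ((C2 + C3) / mh)))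
    (integrableOn_const hvol.ne) asm ?_
  refine (ae_restrict_iff' measurableSet_uIoc).2 (Filter.Eventually.of_forall fun t ht => ?_)
  have htI : t ∈ Set.Icc t0 t1 := hsub' ht
  rw [Real.norm_eq_abs, abs_mul]
  have hb1 : |f t| ≤ C1 := by rw [← Real.norm_eq_abs]; exact hC1 t htI
  have hb2 : |dphi1 c1 L0 (q1 t) (q2 t) * (p1 t / mh) + dphi2 c1 L0 (q1 t) (q2 t) * (p2 t / mh)|
      ≤ L0 * ((C2 + C3) / mh) := by
    refine (g_abs_le mh c1 L0 (q1 t) (q2 t) (p1 t) (p2 t) hmh (hLle t htI)).trans ?_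
    have hb2' : |p1 t| ≤ C2 := by rw [← Real.norm_eq_abs]; exact hC2 t htI
    have hb3' : |p2 t| ≤ C3 := by rw [← Real.norm_eq_abs]; exact hC3 t htI
    gcongr
  exact mul_le_mul hb1 hb2 (abs_nonneg _) hC10

lemma sq_sum_hasDerivAt {mh c1 : ℝ} {q1 q2 p1 p2 : ℝ → ℝ} {t : ℝ}
    (h1 : HasDerivAt q1 (p1 t / mh) t) (h2 : HasDerivAt q2 (p2 t / mh) t) :
    HasDerivAt (fun τ => (q1 τ - c1) ^ 2 + (q2 τ) ^ 2)
      (2 * ((q1 t - c1) * (p1 t / mh) + (q2 t) * (p2 t / mh))) t := by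
  have h := (((h1.sub_const c1).fun_pow 2).fun_add (h2.fun_pow 2))
  refine h.congr_deriv ?_
  push_cast
  ring

lemma phi_hasDerivAt (mh c1 L0 : ℝ) (hmh : mh ≠ 0) (q1 q2 p1 p2 : ℝ → ℝ) (t : ℝ)
    (h1 : HasDerivAt q1 (p1 t / mh) t) (h2 : HasDerivAt q2 (p2 t / mh) t)
    (hL : legLen c1 (q1 t) (q2 t) ≠ 0) :
    HasDerivAt (fun τ => phiPot c1 L0 (q1 τ) (q2 τ))
      (dphi1 c1 L0 (q1 t) (q2 t) * (p1 t / mh) + dphi2 c1 L0 (q1 t) (q2 t) * (p2 t / mh)) t := by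
  have hsne : (q1 t - c1) ^ 2 + (q2 t) ^ 2 ≠ 0 := by
    intro h
    apply hL
    rw [legLen, h, Real.sqrt_zero]
  have hs := sq_sum_hasDerivAt (mh := mh) (c1 := c1) (p1 := p1) (p2 := p2) h1 h2
  have hsqrt : HasDerivAt (fun τ => Real.sqrt ((q1 τ - c1) ^ 2 + (q2 τ) ^ 2))
      (1 / (2 * Real.sqrt ((q1 t - c1) ^ 2 + (q2 t) ^ 2))
        * (2 * ((q1 t - c1) * (p1 t / mh) + (q2 t) * (p2 t / mh)))) t :=
    (Real.hasDerivAt_sqrt hsne).comp t hs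
  have hphi := HasDerivAt.const_mul (-(1 / 2) : ℝ) (((hasDerivAt_const t L0).fun_sub hsqrt).fun_pow 2)
  simp only [phiPot, legLen]
  refine hphi.congr_deriv ?_
  have hLne : Real.sqrt ((q1 t - c1) ^ 2 + (q2 t) ^ 2) ≠ 0 := by
    rw [legLen] at hL; exact hL
  simp only [dphi1, dphi2, legLen]
  push_cast
  field_simp
  ring

lemma legLen_eq_phi (c1 L0 x y : ℝ) (hle : legLen c1 x y ≤ L0) :
    legLen c1 x y = L0 - Real.sqrt (-(2 * phiPot c1 L0 x y)) := by
  have h1 : -(2 * phiPot c1 L0 x y) = (L0 - legLen c1 x y) ^ 2 := by rw [phiPot]; ring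
  rw [h1, Real.sqrt_sq (by linarith)]
  ring

lemma zero_piece (mh c1 L0 : ℝ) (q1 q2 p1 p2 : ℝ → ℝ) {c d : ℝ} (hcd : c ≤ d)
    (hall : ∀ t ∈ Set.Icc c d, legLen c1 (q1 t) (q2 t) = 0) :
    (∫ t in c..d, (dphi1 c1 L0 (q1 t) (q2 t) * (p1 t / mh)
        + dphi2 c1 L0 (q1 t) (q2 t) * (p2 t / mh)))
      = phiPot c1 L0 (q1 d) (q2 d) - phiPot c1 L0 (q1 c) (q2 c) := by
  have h1 : Set.EqOn (fun t => dphi1 c1 L0 (q1 t) (q2 t) * (p1 t / mh)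
      + dphi2 c1 L0 (q1 t) (q2 t) * (p2 t / mh)) (fun _ => (0:ℝ)) (Set.uIcc c d) := by
    intro t ht
    rw [Set.uIcc_of_le hcd] at ht
    simp [dphi1, dphi2, hall t ht]
  rw [intervalIntegral.integral_congr h1, intervalIntegral.integral_zero]
  have hc' : phiPot c1 L0 (q1 c) (q2 c) = -(1/2) * L0 ^ 2 := by
    rw [phiPot, hall c ⟨le_refl c, hcd⟩]; ring
  have hd' : phiPot c1 L0 (q1 d) (q2 d) = -(1/2) * L0 ^ 2 := by
    rw [phiPot, hall d ⟨hcd, le_refl d⟩]; ring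
  rw [hc', hd']; ring

lemma ftc_piece (mh c1 L0 t0 t1 : ℝ) (hmh : 0 < mh)
    (q1 q2 p1 p2 : ℝ → ℝ)
    (hLle : ∀ t ∈ Set.Icc t0 t1, legLen c1 (q1 t) (q2 t) ≤ L0)
    (hq1 : ∀ t ∈ Set.Icc t0 t1, HasDerivAt q1 (p1 t / mh) t)
    (hq2 : ∀ t ∈ Set.Icc t0 t1, HasDerivAt q2 (p2 t / mh) t)
    (hp1c : ContinuousOn p1 (Set.Icc t0 t1)) (hp2c : ContinuousOn p2 (Set.Icc t0 t1))
    {c d : ℝ} (hc : c ∈ Set.Icc t0 t1) (hd : d ∈ Set.Icc t0 t1) (hcd : c ≤ d)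
    (hne : ∀ t ∈ Set.Ioo c d, legLen c1 (q1 t) (q2 t) ≠ 0) :
    (∫ t in c..d, (dphi1 c1 L0 (q1 t) (q2 t) * (p1 t / mh)
        + dphi2 c1 L0 (q1 t) (q2 t) * (p2 t / mh)))
      = phiPot c1 L0 (q1 d) (q2 d) - phiPot c1 L0 (q1 c) (q2 c) := by
  have hq1c : ContinuousOn q1 (Set.Icc t0 t1) :=
    fun s hs => (hq1 s hs).continuousAt.continuousWithinAt
  have hq2c : ContinuousOn q2 (Set.Icc t0 t1) :=
    fun s hs => (hq2 s hs).continuousAt.continuousWithinAt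
  have hφc : ContinuousOn (fun t => phiPot c1 L0 (q1 t) (q2 t)) (Set.Icc t0 t1) := by
    simp only [phiPot]
    exact continuousOn_const.mul ((continuousOn_const.sub (legLen_contOn hq1c hq2c)).pow 2)
  have hint := gIntegrable mh c1 L0 t0 t1 hmh q1 q2 p1 p2 (fun _ => 1) hLle hq1c hq2c
    hp1c hp2c continuousOn_const hc hd
  have hint' : IntervalIntegrable (fun t => dphi1 c1 L0 (q1 t) (q2 t) * (p1 t / mh)
      + dphi2 c1 L0 (q1 t) (q2 t) * (p2 t / mh)) volume c d := by simpa using hint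
  have hsub : Set.Ioo c d ⊆ Set.Icc t0 t1 :=
    fun x hx => (Set.Icc_subset_Icc hc.1 hd.2) (Set.Ioo_subset_Icc_self hx)
  refine intervalIntegral.integral_eq_sub_of_hasDeriv_right_of_le hcd
    (hφc.mono (Set.Icc_subset_Icc hc.1 hd.2)) (fun t ht => ?_) hint'
  exact (phi_hasDerivAt mh c1 L0 hmh.ne' q1 q2 p1 p2 t (hq1 t (hsub ht)) (hq2 t (hsub ht))
    (hne t ht)).hasDerivWithinAt

set_option maxHeartbeats 1000000 in
lemma pieceBound (mh c1 L0 t0 t1 ubar a b : ℝ) (hmh : 0 < mh) (hL0 : 0 < L0)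
    (q1 q2 p1 p2 u1 : ℝ → ℝ)
    (hu1c : ContinuousOn u1 (Set.Icc t0 t1))
    (hu1b : ∀ t ∈ Set.Icc t0 t1, |u1 t| ≤ ubar)
    (hLle : ∀ t ∈ Set.Icc t0 t1, legLen c1 (q1 t) (q2 t) ≤ L0)
    (hq1 : ∀ t ∈ Set.Icc t0 t1, HasDerivAt q1 (p1 t / mh) t)
    (hq2 : ∀ t ∈ Set.Icc t0 t1, HasDerivAt q2 (p2 t / mh) t)
    (hp1c : ContinuousOn p1 (Set.Icc t0 t1)) (hp2c : ContinuousOn p2 (Set.Icc t0 t1))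
    (ha : a ∈ Set.Icc t0 t1) (hb : b ∈ Set.Icc t0 t1) (hab : a ≤ b)
    (hmono : MonotoneOn (fun t => phiPot c1 L0 (q1 t) (q2 t)) (Set.Icc a b) ∨
             AntitoneOn (fun t => phiPot c1 L0 (q1 t) (q2 t)) (Set.Icc a b)) :
    (∫ t in a..b, (dphi1 c1 L0 (q1 t) (q2 t) * (p1 t / mh)
        + dphi2 c1 L0 (q1 t) (q2 t) * (p2 t / mh)))
      = phiPot c1 L0 (q1 b) (q2 b) - phiPot c1 L0 (q1 a) (q2 a) ∧
    |∫ t in a..b, u1 t * (dphi1 c1 L0 (q1 t) (q2 t) * (p1 t / mh)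
        + dphi2 c1 L0 (q1 t) (q2 t) * (p2 t / mh))| ≤ ubar * (L0 ^ 2 / 2) := by
  have hI : Set.Icc a b ⊆ Set.Icc t0 t1 := Set.Icc_subset_Icc ha.1 hb.2
  have h0u : (0:ℝ) ≤ ubar := le_trans (abs_nonneg _) (hu1b a ha)
  have hq1c : ContinuousOn q1 (Set.Icc t0 t1) :=
    fun s hs => (hq1 s hs).continuousAt.continuousWithinAt
  have hq2c : ContinuousOn q2 (Set.Icc t0 t1) :=
    fun s hs => (hq2 s hs).continuousAt.continuousWithinAt
  have hLc : ContinuousOn (fun t => legLen c1 (q1 t) (q2 t)) (Set.Icc t0 t1) :=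
    legLen_contOn hq1c hq2c
  have gInt : ∀ f : ℝ → ℝ, ContinuousOn f (Set.Icc t0 t1) → ∀ c d : ℝ, c ∈ Set.Icc t0 t1 →
      d ∈ Set.Icc t0 t1 → IntervalIntegrable (fun t => f t * (dphi1 c1 L0 (q1 t) (q2 t)
        * (p1 t / mh) + dphi2 c1 L0 (q1 t) (q2 t) * (p2 t / mh))) volume c d :=
    fun f hf c d hc hd =>
      gIntegrable mh c1 L0 t0 t1 hmh q1 q2 p1 p2 f hLle hq1c hq2c hp1c hp2c hf hc hd
  have gInt1 : ∀ c d : ℝ, c ∈ Set.Icc t0 t1 → d ∈ Set.Icc t0 t1 →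
      IntervalIntegrable (fun t => dphi1 c1 L0 (q1 t) (q2 t) * (p1 t / mh)
        + dphi2 c1 L0 (q1 t) (q2 t) * (p2 t / mh)) volume c d := by
    intro c d hc hd
    simpa using gInt (fun _ => 1) continuousOn_const c d hc hd
  -- bounds on phi
  have hφbd : ∀ t ∈ Set.Icc t0 t1, -(L0 ^ 2 / 2) ≤ phiPot c1 L0 (q1 t) (q2 t)
      ∧ phiPot c1 L0 (q1 t) (q2 t) ≤ 0 := by
    intro t ht
    have h1 := legLen_nonneg c1 (q1 t) (q2 t)
    have h2 := hLle t ht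
    constructor <;> (rw [phiPot]; nlinarith)
  rcases hmono with hm | hm
  · -- monotone case
    have hLm : MonotoneOn (fun t => legLen c1 (q1 t) (q2 t)) (Set.Icc a b) := by
      intro x hx y hy hxy
      have h : phiPot c1 L0 (q1 x) (q2 x) ≤ phiPot c1 L0 (q1 y) (q2 y) := hm hx hy hxy
      show legLen c1 (q1 x) (q2 x) ≤ legLen c1 (q1 y) (q2 y)
      rw [legLen_eq_phi c1 L0 (q1 x) (q2 x) (hLle x (hI hx)),
        legLen_eq_phi c1 L0 (q1 y) (q2 y) (hLle y (hI hy))]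
      have := Real.sqrt_le_sqrt (show -(2 * phiPot c1 L0 (q1 y) (q2 y))
        ≤ -(2 * phiPot c1 L0 (q1 x) (q2 x)) by linarith)
      linarith
    have hgsign : ∀ t ∈ Set.Ioo a b, 0 ≤ dphi1 c1 L0 (q1 t) (q2 t) * (p1 t / mh)
        + dphi2 c1 L0 (q1 t) (q2 t) * (p2 t / mh) := by
      intro t ht
      have htI : t ∈ Set.Icc t0 t1 := hI (Set.Ioo_subset_Icc_self ht)
      rw [g_rewrite mh c1 L0 (q1 t) (q2 t) (p1 t) (p2 t)]
      rcases eq_or_lt_of_le (legLen_nonneg c1 (q1 t) (q2 t)) with h0 | h0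
      · rw [← h0, div_zero]
      · have hs := sq_sum_hasDerivAt (mh := mh) (c1 := c1) (p1 := p1) (p2 := p2)
          (hq1 t htI) (hq2 t htI)
        have hsm : MonotoneOn (fun τ => (q1 τ - c1) ^ 2 + (q2 τ) ^ 2) (Set.Icc a b) := by
          intro x hx y hy hxy
          have e1 : ∀ z, (q1 z - c1) ^ 2 + (q2 z) ^ 2 = (legLen c1 (q1 z) (q2 z)) ^ 2 := by
            intro z; rw [legLen, Real.sq_sqrt (by positivity)]
          simp only [e1]
          exact pow_le_pow_left₀ (legLen_nonneg _ _ _) (hLm hx hy hxy) 2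
        have hσ := deriv_nonneg_of_monotoneOn hsm ht hs
        have hσ' : 0 ≤ (q1 t - c1) * (p1 t / mh) + q2 t * (p2 t / mh) := by linarith
        exact div_nonneg (mul_nonneg (by linarith [hLle t htI]) hσ') (legLen_nonneg _ _ _)
    -- split point
    have hZclosed : IsClosed (Set.Icc a b ∩ (fun t => legLen c1 (q1 t) (q2 t)) ⁻¹' {0}) :=
      (hLc.mono hI).preimage_isClosed_of_isClosed isClosed_Icc isClosed_singleton
    set Z := Set.Icc a b ∩ (fun t => legLen c1 (q1 t) (q2 t)) ⁻¹' {0} with hZdef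
    have hKclosed : IsClosed (insert a Z) := by
      rw [Set.insert_eq]; exact isClosed_singleton.union hZclosed
    have hKne : (insert a Z).Nonempty := ⟨a, Set.mem_insert _ _⟩
    have hKbdd : BddAbove (insert a Z) := ⟨b, by rintro x (rfl | hx); exacts [hab, hx.1.2]⟩
    set ts := sSup (insert a Z) with hts
    have htsmem : ts ∈ insert a Z := hKclosed.csSup_mem hKne hKbdd
    have htsa : a ≤ ts := le_csSup hKbdd (Set.mem_insert _ _)
    have htsb : ts ≤ b := csSup_le hKne (by rintro x (rfl | hx); exacts [hab, hx.1.2])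
    have htsI : ts ∈ Set.Icc t0 t1 := hI ⟨htsa, htsb⟩
    have hpos : ∀ t ∈ Set.Ioo ts b, legLen c1 (q1 t) (q2 t) ≠ 0 := by
      intro t ht h0
      have hmem : t ∈ insert a Z :=
        Set.mem_insert_of_mem _ ⟨⟨htsa.trans ht.1.le, ht.2.le⟩, h0⟩
      exact absurd (le_csSup hKbdd hmem) (not_le.2 ht.1)
    have hpart1 : (∫ t in a..ts, (dphi1 c1 L0 (q1 t) (q2 t) * (p1 t / mh)
        + dphi2 c1 L0 (q1 t) (q2 t) * (p2 t / mh)))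
        = phiPot c1 L0 (q1 ts) (q2 ts) - phiPot c1 L0 (q1 a) (q2 a) := by
      rcases Set.mem_insert_iff.1 htsmem with h | h
      · rw [h]; simp
      · have hZts : legLen c1 (q1 ts) (q2 ts) = 0 := h.2
        refine zero_piece mh c1 L0 q1 q2 p1 p2 htsa (fun t ht => ?_)
        refine le_antisymm ?_ (legLen_nonneg _ _ _)
        have h3 : legLen c1 (q1 t) (q2 t) ≤ legLen c1 (q1 ts) (q2 ts) :=
          hLm ⟨ht.1, ht.2.trans htsb⟩ ⟨htsa, htsb⟩ ht.2
        rw [hZts] at h3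
        exact h3
    have hpart2 : (∫ t in ts..b, (dphi1 c1 L0 (q1 t) (q2 t) * (p1 t / mh)
        + dphi2 c1 L0 (q1 t) (q2 t) * (p2 t / mh)))
        = phiPot c1 L0 (q1 b) (q2 b) - phiPot c1 L0 (q1 ts) (q2 ts) :=
      ftc_piece mh c1 L0 t0 t1 hmh q1 q2 p1 p2 hLle hq1 hq2 hp1c hp2c htsI hb htsb hpos
    have hΔ : (∫ t in a..b, (dphi1 c1 L0 (q1 t) (q2 t) * (p1 t / mh)
        + dphi2 c1 L0 (q1 t) (q2 t) * (p2 t / mh)))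
        = phiPot c1 L0 (q1 b) (q2 b) - phiPot c1 L0 (q1 a) (q2 a) := by
      rw [← intervalIntegral.integral_add_adjacent_intervals
        (gInt1 a ts ha htsI) (gInt1 ts b htsI hb), hpart1, hpart2]
      ring
    refine ⟨hΔ, ?_⟩
    have hφab : phiPot c1 L0 (q1 a) (q2 a) ≤ phiPot c1 L0 (q1 b) (q2 b) :=
      hm (Set.left_mem_Icc.2 hab) (Set.right_mem_Icc.2 hab) hab
    have hIu := gInt u1 hu1c a b ha hb
    have hIub := gInt (fun _ => ubar) continuousOn_const a b ha hb
    have hIub' := gInt (fun _ => -ubar) continuousOn_const a b ha hb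
    have haeub : (fun t => u1 t * (dphi1 c1 L0 (q1 t) (q2 t) * (p1 t / mh)
        + dphi2 c1 L0 (q1 t) (q2 t) * (p2 t / mh)))
        ≤ᵐ[volume.restrict (Set.Icc a b)] (fun t => ubar * (dphi1 c1 L0 (q1 t) (q2 t)
          * (p1 t / mh) + dphi2 c1 L0 (q1 t) (q2 t) * (p2 t / mh))) := by
      rw [Filter.EventuallyLE, ae_restrict_iff' measurableSet_Icc]
      filter_upwards [MeasureTheory.Ioo_ae_eq_Icc (μ := volume) (a := a) (b := b)] with t hEq htIcc
      have htIoo : t ∈ Set.Ioo a b := by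
        have h' : Set.Ioo a b t := by rw [hEq]; exact htIcc
        exact h'
      exact mul_le_mul_of_nonneg_right ((abs_le.1 (hu1b t (hI htIcc))).2) (hgsign t htIoo)
    have haelb : (fun t => -ubar * (dphi1 c1 L0 (q1 t) (q2 t) * (p1 t / mh)
        + dphi2 c1 L0 (q1 t) (q2 t) * (p2 t / mh)))
        ≤ᵐ[volume.restrict (Set.Icc a b)] (fun t => u1 t * (dphi1 c1 L0 (q1 t) (q2 t)
          * (p1 t / mh) + dphi2 c1 L0 (q1 t) (q2 t) * (p2 t / mh))) := by
      rw [Filter.EventuallyLE, ae_restrict_iff' measurableSet_Icc]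
      filter_upwards [MeasureTheory.Ioo_ae_eq_Icc (μ := volume) (a := a) (b := b)] with t hEq htIcc
      have htIoo : t ∈ Set.Ioo a b := by
        have h' : Set.Ioo a b t := by rw [hEq]; exact htIcc
        exact h'
      exact mul_le_mul_of_nonneg_right ((abs_le.1 (hu1b t (hI htIcc))).1) (hgsign t htIoo)
    have h1 := intervalIntegral.integral_mono_ae_restrict hab hIu hIub haeub
    have h2 := intervalIntegral.integral_mono_ae_restrict hab hIub' hIu haelb
    rw [intervalIntegral.integral_const_mul, hΔ] at h1
    rw [intervalIntegral.integral_const_mul, hΔ] at h2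
    have hbd1 := (hφbd a ha).1
    have hbd2 := (hφbd b hb).2
    rw [abs_le]
    constructor <;> nlinarith
  · -- antitone case
    have hLm : AntitoneOn (fun t => legLen c1 (q1 t) (q2 t)) (Set.Icc a b) := by
      intro x hx y hy hxy
      have h : phiPot c1 L0 (q1 y) (q2 y) ≤ phiPot c1 L0 (q1 x) (q2 x) := hm hx hy hxy
      show legLen c1 (q1 y) (q2 y) ≤ legLen c1 (q1 x) (q2 x)
      rw [legLen_eq_phi c1 L0 (q1 x) (q2 x) (hLle x (hI hx)),
        legLen_eq_phi c1 L0 (q1 y) (q2 y) (hLle y (hI hy))]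
      have := Real.sqrt_le_sqrt (show -(2 * phiPot c1 L0 (q1 x) (q2 x))
        ≤ -(2 * phiPot c1 L0 (q1 y) (q2 y)) by linarith)
      linarith
    have hgsign : ∀ t ∈ Set.Ioo a b, dphi1 c1 L0 (q1 t) (q2 t) * (p1 t / mh)
        + dphi2 c1 L0 (q1 t) (q2 t) * (p2 t / mh) ≤ 0 := by
      intro t ht
      have htI : t ∈ Set.Icc t0 t1 := hI (Set.Ioo_subset_Icc_self ht)
      rw [g_rewrite mh c1 L0 (q1 t) (q2 t) (p1 t) (p2 t)]
      rcases eq_or_lt_of_le (legLen_nonneg c1 (q1 t) (q2 t)) with h0 | h0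
      · rw [← h0, div_zero]
      · have hs := sq_sum_hasDerivAt (mh := mh) (c1 := c1) (p1 := p1) (p2 := p2)
          (hq1 t htI) (hq2 t htI)
        have hsm : AntitoneOn (fun τ => (q1 τ - c1) ^ 2 + (q2 τ) ^ 2) (Set.Icc a b) := by
          intro x hx y hy hxy
          have e1 : ∀ z, (q1 z - c1) ^ 2 + (q2 z) ^ 2 = (legLen c1 (q1 z) (q2 z)) ^ 2 := by
            intro z; rw [legLen, Real.sq_sqrt (by positivity)]
          simp only [e1]
          exact pow_le_pow_left₀ (legLen_nonneg _ _ _) (hLm hx hy hxy) 2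
        have hσ := deriv_nonpos_of_antitoneOn hsm ht hs
        have hσ' : (q1 t - c1) * (p1 t / mh) + q2 t * (p2 t / mh) ≤ 0 := by linarith
        exact div_nonpos_of_nonpos_of_nonneg
          (mul_nonpos_of_nonneg_of_nonpos (by linarith [hLle t htI]) hσ')
          (legLen_nonneg _ _ _)
    have hZclosed : IsClosed (Set.Icc a b ∩ (fun t => legLen c1 (q1 t) (q2 t)) ⁻¹' {0}) :=
      (hLc.mono hI).preimage_isClosed_of_isClosed isClosed_Icc isClosed_singleton
    set Z := Set.Icc a b ∩ (fun t => legLen c1 (q1 t) (q2 t)) ⁻¹' {0} with hZdef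
    have hKclosed : IsClosed (insert b Z) := by
      rw [Set.insert_eq]; exact isClosed_singleton.union hZclosed
    have hKne : (insert b Z).Nonempty := ⟨b, Set.mem_insert _ _⟩
    have hKbdd : BddBelow (insert b Z) := ⟨a, by rintro x (rfl | hx); exacts [hab, hx.1.1]⟩
    set ts := sInf (insert b Z) with hts
    have htsmem : ts ∈ insert b Z := hKclosed.csInf_mem hKne hKbdd
    have htsb : ts ≤ b := csInf_le hKbdd (Set.mem_insert _ _)
    have htsa : a ≤ ts := le_csInf hKne (by rintro x (rfl | hx); exacts [hab, hx.1.1])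
    have htsI : ts ∈ Set.Icc t0 t1 := hI ⟨htsa, htsb⟩
    have hpos : ∀ t ∈ Set.Ioo a ts, legLen c1 (q1 t) (q2 t) ≠ 0 := by
      intro t ht h0
      have hmem : t ∈ insert b Z :=
        Set.mem_insert_of_mem _ ⟨⟨ht.1.le, ht.2.le.trans htsb⟩, h0⟩
      exact absurd (csInf_le hKbdd hmem) (not_le.2 ht.2)
    have hpart1 : (∫ t in a..ts, (dphi1 c1 L0 (q1 t) (q2 t) * (p1 t / mh)
        + dphi2 c1 L0 (q1 t) (q2 t) * (p2 t / mh)))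
        = phiPot c1 L0 (q1 ts) (q2 ts) - phiPot c1 L0 (q1 a) (q2 a) :=
      ftc_piece mh c1 L0 t0 t1 hmh q1 q2 p1 p2 hLle hq1 hq2 hp1c hp2c ha htsI htsa hpos
    have hpart2 : (∫ t in ts..b, (dphi1 c1 L0 (q1 t) (q2 t) * (p1 t / mh)
        + dphi2 c1 L0 (q1 t) (q2 t) * (p2 t / mh)))
        = phiPot c1 L0 (q1 b) (q2 b) - phiPot c1 L0 (q1 ts) (q2 ts) := by
      rcases Set.mem_insert_iff.1 htsmem with h | h
      · rw [h]; simp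
      · have hZts : legLen c1 (q1 ts) (q2 ts) = 0 := h.2
        refine zero_piece mh c1 L0 q1 q2 p1 p2 htsb (fun t ht => ?_)
        refine le_antisymm ?_ (legLen_nonneg _ _ _)
        have h3 : legLen c1 (q1 t) (q2 t) ≤ legLen c1 (q1 ts) (q2 ts) :=
          hLm ⟨htsa, htsb⟩ ⟨htsa.trans ht.1, ht.2⟩ ht.1
        rw [hZts] at h3
        exact h3
    have hΔ : (∫ t in a..b, (dphi1 c1 L0 (q1 t) (q2 t) * (p1 t / mh)
        + dphi2 c1 L0 (q1 t) (q2 t) * (p2 t / mh)))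
        = phiPot c1 L0 (q1 b) (q2 b) - phiPot c1 L0 (q1 a) (q2 a) := by
      rw [← intervalIntegral.integral_add_adjacent_intervals
        (gInt1 a ts ha htsI) (gInt1 ts b htsI hb), hpart1, hpart2]
      ring
    refine ⟨hΔ, ?_⟩
    have hφab : phiPot c1 L0 (q1 b) (q2 b) ≤ phiPot c1 L0 (q1 a) (q2 a) :=
      hm (Set.left_mem_Icc.2 hab) (Set.right_mem_Icc.2 hab) hab
    have hIu := gInt u1 hu1c a b ha hb
    have hIub := gInt (fun _ => ubar) continuousOn_const a b ha hb
    have hIub' := gInt (fun _ => -ubar) continuousOn_const a b ha hb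
    have haeub : (fun t => u1 t * (dphi1 c1 L0 (q1 t) (q2 t) * (p1 t / mh)
        + dphi2 c1 L0 (q1 t) (q2 t) * (p2 t / mh)))
        ≤ᵐ[volume.restrict (Set.Icc a b)] (fun t => -ubar * (dphi1 c1 L0 (q1 t) (q2 t)
          * (p1 t / mh) + dphi2 c1 L0 (q1 t) (q2 t) * (p2 t / mh))) := by
      rw [Filter.EventuallyLE, ae_restrict_iff' measurableSet_Icc]
      filter_upwards [MeasureTheory.Ioo_ae_eq_Icc (μ := volume) (a := a) (b := b)] with t hEq htIcc
      have htIoo : t ∈ Set.Ioo a b := by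
        have h' : Set.Ioo a b t := by rw [hEq]; exact htIcc
        exact h'
      exact mul_le_mul_of_nonpos_right ((abs_le.1 (hu1b t (hI htIcc))).1) (hgsign t htIoo)
    have haelb : (fun t => ubar * (dphi1 c1 L0 (q1 t) (q2 t) * (p1 t / mh)
        + dphi2 c1 L0 (q1 t) (q2 t) * (p2 t / mh)))
        ≤ᵐ[volume.restrict (Set.Icc a b)] (fun t => u1 t * (dphi1 c1 L0 (q1 t) (q2 t)
          * (p1 t / mh) + dphi2 c1 L0 (q1 t) (q2 t) * (p2 t / mh))) := by
      rw [Filter.EventuallyLE, ae_restrict_iff' measurableSet_Icc]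
      filter_upwards [MeasureTheory.Ioo_ae_eq_Icc (μ := volume) (a := a) (b := b)] with t hEq htIcc
      have htIoo : t ∈ Set.Ioo a b := by
        have h' : Set.Ioo a b t := by rw [hEq]; exact htIcc
        exact h'
      exact mul_le_mul_of_nonpos_right ((abs_le.1 (hu1b t (hI htIcc))).2) (hgsign t htIoo)
    have h1 := intervalIntegral.integral_mono_ae_restrict hab hIu hIub' haeub
    have h2 := intervalIntegral.integral_mono_ae_restrict hab hIub hIu haelb
    rw [intervalIntegral.integral_const_mul, hΔ] at h1
    rw [intervalIntegral.integral_const_mul, hΔ] at h2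
    have hbd1 := (hφbd b hb).1
    have hbd2 := (hφbd a ha).2
    rw [abs_le]
    constructor <;> nlinarith

set_option maxHeartbeats 1000000 in
/-- Bounded energy change during the single support phase of the V-SLIP model:
if the stiffness variation satisfies `|u1| ≤ ū`, the leg length stays in `[0, L0]`, and the
spring potential `φ_1(q(t))` is monotone on `[t0, t_m]` and on `[t_m, t1]`, then
`|H(t1) - H(t0)| ≤ ū L0²`. -/
theorem stmt10 (mh g0 k0 L0 c1 ubar : ℝ) (hmh : 0 < mh) (hg : 0 < g0) (hk : 0 < k0)
    (hL0 : 0 < L0) (hubar : 0 < ubar)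
    (t0 t1 tm : ℝ) (ht01 : t0 ≤ t1) (htm : tm ∈ Set.Icc t0 t1)
    (q1 q2 p1 p2 u1 : ℝ → ℝ)
    (hu1c : ContinuousOn u1 (Set.Icc t0 t1))
    (hu1b : ∀ t ∈ Set.Icc t0 t1, |u1 t| ≤ ubar)
    (hLpos : ∀ t ∈ Set.Icc t0 t1, 0 ≤ legLen c1 (q1 t) (q2 t))
    (hLle : ∀ t ∈ Set.Icc t0 t1, legLen c1 (q1 t) (q2 t) ≤ L0)
    (hq1 : ∀ t ∈ Set.Icc t0 t1, HasDerivAt q1 (p1 t / mh) t)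
    (hq2 : ∀ t ∈ Set.Icc t0 t1, HasDerivAt q2 (p2 t / mh) t)
    (hp1 : ∀ t ∈ Set.Icc t0 t1, HasDerivAt p1
      (k0 * (L0 - legLen c1 (q1 t) (q2 t)) * (q1 t - c1) / legLen c1 (q1 t) (q2 t)
        + u1 t * dphi1 c1 L0 (q1 t) (q2 t)) t)
    (hp2 : ∀ t ∈ Set.Icc t0 t1, HasDerivAt p2
      (-(mh * g0)
        + k0 * (L0 - legLen c1 (q1 t) (q2 t)) * q2 t / legLen c1 (q1 t) (q2 t)
        + u1 t * dphi2 c1 L0 (q1 t) (q2 t)) t)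
    (hmono1 : MonotoneOn (fun t => phiPot c1 L0 (q1 t) (q2 t)) (Set.Icc t0 tm) ∨
              AntitoneOn (fun t => phiPot c1 L0 (q1 t) (q2 t)) (Set.Icc t0 tm))
    (hmono2 : MonotoneOn (fun t => phiPot c1 L0 (q1 t) (q2 t)) (Set.Icc tm t1) ∨
              AntitoneOn (fun t => phiPot c1 L0 (q1 t) (q2 t)) (Set.Icc tm t1)) :
    |Hss mh g0 k0 L0 c1 (q1 t1) (q2 t1) (p1 t1) (p2 t1)
      - Hss mh g0 k0 L0 c1 (q1 t0) (q2 t0) (p1 t0) (p2 t0)| ≤ ubar * L0 ^ 2 := by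
  have ht0 : t0 ∈ Set.Icc t0 t1 := ⟨le_refl _, ht01⟩
  have ht1' : t1 ∈ Set.Icc t0 t1 := ⟨ht01, le_refl _⟩
  have hp1c : ContinuousOn p1 (Set.Icc t0 t1) :=
    fun s hs => (hp1 s hs).continuousAt.continuousWithinAt
  have hp2c : ContinuousOn p2 (Set.Icc t0 t1) :=
    fun s hs => (hp2 s hs).continuousAt.continuousWithinAt
  have hq1c : ContinuousOn q1 (Set.Icc t0 t1) :=
    fun s hs => (hq1 s hs).continuousAt.continuousWithinAt
  have hq2c : ContinuousOn q2 (Set.Icc t0 t1) :=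
    fun s hs => (hq2 s hs).continuousAt.continuousWithinAt
  -- derivative of the mechanical energy
  have hE : ∀ t ∈ Set.Icc t0 t1,
      HasDerivAt (fun τ => (p1 τ ^ 2 + p2 τ ^ 2) / (2 * mh) + mh * g0 * q2 τ)
      ((k0 + u1 t) * (dphi1 c1 L0 (q1 t) (q2 t) * (p1 t / mh)
        + dphi2 c1 L0 (q1 t) (q2 t) * (p2 t / mh))) t := by
    intro t ht
    have h1 := hp1 t ht
    have h2 := hp2 t ht
    have h3 := hq2 t ht
    have hK := (((h1.fun_pow 2).fun_add (h2.fun_pow 2)).div_const (2 * mh)).fun_add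
      (HasDerivAt.const_mul (mh * g0) h3)
    refine hK.congr_deriv ?_
    simp only [dphi1, dphi2]
    push_cast
    rcases eq_or_ne (legLen c1 (q1 t) (q2 t)) 0 with h0 | h0
    · rw [h0]
      field_simp
      ring
    · field_simp
      ring
  -- FTC for the energy
  have hintE := gIntegrable mh c1 L0 t0 t1 hmh q1 q2 p1 p2 (fun t => k0 + u1 t) hLle hq1c hq2c
    hp1c hp2c (continuousOn_const.add hu1c) ht0 ht1'
  have hftcE : (∫ t in t0..t1, (k0 + u1 t) * (dphi1 c1 L0 (q1 t) (q2 t) * (p1 t / mh)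
        + dphi2 c1 L0 (q1 t) (q2 t) * (p2 t / mh)))
      = ((p1 t1 ^ 2 + p2 t1 ^ 2) / (2 * mh) + mh * g0 * q2 t1)
        - ((p1 t0 ^ 2 + p2 t0 ^ 2) / (2 * mh) + mh * g0 * q2 t0) :=
    intervalIntegral.integral_eq_sub_of_hasDerivAt
      (fun t ht => hE t (by rwa [Set.uIcc_of_le ht01] at ht)) hintE
  -- split the integral at tm
  have hadj : (∫ t in t0..t1, (k0 + u1 t) * (dphi1 c1 L0 (q1 t) (q2 t) * (p1 t / mh)
        + dphi2 c1 L0 (q1 t) (q2 t) * (p2 t / mh)))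
      = (∫ t in t0..tm, (k0 + u1 t) * (dphi1 c1 L0 (q1 t) (q2 t) * (p1 t / mh)
          + dphi2 c1 L0 (q1 t) (q2 t) * (p2 t / mh)))
        + ∫ t in tm..t1, (k0 + u1 t) * (dphi1 c1 L0 (q1 t) (q2 t) * (p1 t / mh)
          + dphi2 c1 L0 (q1 t) (q2 t) * (p2 t / mh)) :=
    (intervalIntegral.integral_add_adjacent_intervals
      (gIntegrable mh c1 L0 t0 t1 hmh q1 q2 p1 p2 (fun t => k0 + u1 t) hLle hq1c hq2c
        hp1c hp2c (continuousOn_const.add hu1c) ht0 htm)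
      (gIntegrable mh c1 L0 t0 t1 hmh q1 q2 p1 p2 (fun t => k0 + u1 t) hLle hq1c hq2c
        hp1c hp2c (continuousOn_const.add hu1c) htm ht1')).symm
  have hsplit : ∀ c d : ℝ, c ∈ Set.Icc t0 t1 → d ∈ Set.Icc t0 t1 →
      (∫ t in c..d, (k0 + u1 t) * (dphi1 c1 L0 (q1 t) (q2 t) * (p1 t / mh)
        + dphi2 c1 L0 (q1 t) (q2 t) * (p2 t / mh)))
      = k0 * (∫ t in c..d, (dphi1 c1 L0 (q1 t) (q2 t) * (p1 t / mh)
          + dphi2 c1 L0 (q1 t) (q2 t) * (p2 t / mh)))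
        + ∫ t in c..d, u1 t * (dphi1 c1 L0 (q1 t) (q2 t) * (p1 t / mh)
          + dphi2 c1 L0 (q1 t) (q2 t) * (p2 t / mh)) := by
    intro c d hc hd
    rw [← intervalIntegral.integral_const_mul]
    rw [← intervalIntegral.integral_add
      (gIntegrable mh c1 L0 t0 t1 hmh q1 q2 p1 p2 (fun _ => k0) hLle hq1c hq2c
        hp1c hp2c continuousOn_const hc hd)
      (gIntegrable mh c1 L0 t0 t1 hmh q1 q2 p1 p2 u1 hLle hq1c hq2c
        hp1c hp2c hu1c hc hd)]
    exact intervalIntegral.integral_congr fun t _ => by ring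
  obtain ⟨hΔ1, hA1⟩ := pieceBound mh c1 L0 t0 t1 ubar t0 tm hmh hL0 q1 q2 p1 p2 u1
    hu1c hu1b hLle hq1 hq2 hp1c hp2c ht0 htm htm.1 hmono1
  obtain ⟨hΔ2, hA2⟩ := pieceBound mh c1 L0 t0 t1 ubar tm t1 hmh hL0 q1 q2 p1 p2 u1
    hu1c hu1b hLle hq1 hq2 hp1c hp2c htm ht1' htm.2 hmono2
  have hs1 := hsplit t0 tm ht0 htm
  have hs2 := hsplit tm t1 htm ht1'
  have hrepr : ∀ s : ℝ, Hss mh g0 k0 L0 c1 (q1 s) (q2 s) (p1 s) (p2 s)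
      = ((p1 s ^ 2 + p2 s ^ 2) / (2 * mh) + mh * g0 * q2 s)
        - k0 * phiPot c1 L0 (q1 s) (q2 s) := by
    intro s
    rw [Hss, phiPot]
    ring
  rw [hrepr t1, hrepr t0]
  have hcomb : (((p1 t1 ^ 2 + p2 t1 ^ 2) / (2 * mh) + mh * g0 * q2 t1)
        - k0 * phiPot c1 L0 (q1 t1) (q2 t1))
      - (((p1 t0 ^ 2 + p2 t0 ^ 2) / (2 * mh) + mh * g0 * q2 t0)
        - k0 * phiPot c1 L0 (q1 t0) (q2 t0))
      = (∫ t in t0..tm, u1 t * (dphi1 c1 L0 (q1 t) (q2 t) * (p1 t / mh)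
          + dphi2 c1 L0 (q1 t) (q2 t) * (p2 t / mh)))
        + ∫ t in tm..t1, u1 t * (dphi1 c1 L0 (q1 t) (q2 t) * (p1 t / mh)
          + dphi2 c1 L0 (q1 t) (q2 t) * (p2 t / mh)) := by
    rw [hΔ1] at hs1
    rw [hΔ2] at hs2
    rw [hadj, hs1, hs2] at hftcE
    linarith
  rw [hcomb]
  calc |(∫ t in t0..tm, u1 t * (dphi1 c1 L0 (q1 t) (q2 t) * (p1 t / mh)
          + dphi2 c1 L0 (q1 t) (q2 t) * (p2 t / mh)))
        + ∫ t in tm..t1, u1 t * (dphi1 c1 L0 (q1 t) (q2 t) * (p1 t / mh)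
          + dphi2 c1 L0 (q1 t) (q2 t) * (p2 t / mh))|
      ≤ |(∫ t in t0..tm, u1 t * (dphi1 c1 L0 (q1 t) (q2 t) * (p1 t / mh)
          + dphi2 c1 L0 (q1 t) (q2 t) * (p2 t / mh)))|
        + |∫ t in tm..t1, u1 t * (dphi1 c1 L0 (q1 t) (q2 t) * (p1 t / mh)
          + dphi2 c1 L0 (q1 t) (q2 t) * (p2 t / mh))| := abs_add_le _ _
    _ ≤ ubar * (L0 ^ 2 / 2) + ubar * (L0 ^ 2 / 2) := add_le_add hA1 hA2
    _ = ubar * L0 ^ 2 := by ring
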